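/- Far-field bound via the divergence theorem: Let $M > 0$ and let $f : \mathbb{R}^2 \to \mathbb{R}$ be continuously differentiable with $-M < f(y) < M$ for all $y$ and $\nabla f \in L^2(\mathbb{R}^2)$. Fix $\overline{x} = (x, x_3) \in \mathbb{R}^3$ with $|x_3| \le M$, and let $0 < L < R$. Set $U = \{(y, y_3) \in \mathbb{R}^3 : L \le |x - y| \le R,\ f(y) \le y_3 \le M\}$. Then there is a universal constant $C$ such that $\Big| \int_{U} \frac{(x_1 - y_1)(x_3 - y_3)}{|\overline{x} - \overline{y}|^5}\, d\overline{y} \Big| \le C \Big( \frac{\|\partial_{x_1} f\|_{L^2}}{L} + \frac{M}{L} + \frac{M}{R} \Big)$. -/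

import Mathlib

open MeasureTheory Filter Topology Real Set
open scoped RealInnerProductSpace

noncomputable section

abbrev E2 := EuclideanSpace ℝ (Fin 2)
abbrev E3 := EuclideanSpace ℝ (Fin 3)

/-- The point `(x₁, x₂, c) ∈ ℝ³` built from `x = (x₁,x₂) ∈ ℝ²` and `c ∈ ℝ`. -/
def bar3 (x : E2) (c : ℝ) : E3 := (WithLp.equiv 2 (Fin 3 → ℝ)).symm ![x 0, x 1, c]

/-- Projection of a point of `ℝ³` onto its first two coordinates. -/
def proj (z : E3) : E2 := (WithLp.equiv 2 (Fin 2 → ℝ)).symm ![z 0, z 1]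

/-- The `L²(ℝ²)` norm of a function. -/
def l2norm (h : E2 → ℝ) : ℝ := (∫ x : E2, (h x) ^ 2) ^ (1 / 2 : ℝ)

/-! ### Auxiliary lemmas -/

lemma FFD.abs_coord_le_norm3 (v : E3) (i : Fin 3) : |v i| ≤ ‖v‖ := by
  rw [EuclideanSpace.norm_eq]
  refine Real.le_sqrt_of_sq_le ?_
  have h := Finset.single_le_sum (f := fun j => ‖v j‖ ^ 2)
    (fun j _ => sq_nonneg _) (Finset.mem_univ i)
  simpa [Real.norm_eq_abs, sq_abs] using h

lemma FFD.proj_norm_le (x : E2) (x3 : ℝ) (z : E3) : ‖x - proj z‖ ≤ ‖bar3 x x3 - z‖ := by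
  rw [EuclideanSpace.norm_eq, EuclideanSpace.norm_eq]
  apply Real.sqrt_le_sqrt
  have h0 : (x - proj z) 0 = x 0 - z 0 := rfl
  have h1 : (x - proj z) 1 = x 1 - z 1 := rfl
  have g0 : (bar3 x x3 - z) 0 = x 0 - z 0 := rfl
  have g1 : (bar3 x x3 - z) 1 = x 1 - z 1 := rfl
  rw [Fin.sum_univ_two, Fin.sum_univ_three, h0, h1, g0, g1]
  have : (0:ℝ) ≤ ‖(bar3 x x3 - z) 2‖ ^ 2 := sq_nonneg _
  linarith

lemma FFD.continuous_proj : Continuous proj := by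
  have h : Continuous fun z : E3 => (![z 0, z 1] : Fin 2 → ℝ) := by
    refine continuous_pi fun j => ?_
    fin_cases j
    · simpa using (EuclideanSpace.proj (0 : Fin 3)).continuous
    · simpa using (EuclideanSpace.proj (1 : Fin 3)).continuous
  exact (PiLp.continuous_toLp (p := 2) (β := fun _ : Fin 2 => ℝ)).comp h

lemma FFD.radial_integral (L R : ℝ) (hL : 0 < L) (hLR : L < R) :
    ∫ y in Ioi (0:ℝ), y ^ 1 • Set.indicator (Icc L R) (fun r => (r^3)⁻¹) y
      = 1/L - 1/R := by
  have hset : Ioi (0:ℝ) ∩ Icc L R = Icc L R :=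
    Set.inter_eq_right.2 (fun y hy => lt_of_lt_of_le hL hy.1)
  have key : ∀ y : ℝ, y ^ 1 • Set.indicator (Icc L R) (fun r => (r^3)⁻¹) y
      = Set.indicator (Icc L R) (fun r => r * (r^3)⁻¹) y := by
    intro y
    by_cases hy : y ∈ Icc L R <;> simp [Set.indicator_of_mem, Set.indicator_of_notMem, hy]
  rw [MeasureTheory.integral_congr_ae (Filter.Eventually.of_forall key)]
  rw [MeasureTheory.setIntegral_indicator measurableSet_Icc, hset]
  have heq : EqOn (fun r : ℝ => r * (r^3)⁻¹) (fun r : ℝ => r ^ (-2 : ℤ)) (Icc L R) := by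
    intro r hr
    have hr0 : r ≠ 0 := by have := lt_of_lt_of_le hL hr.1; positivity
    beta_reduce
    rw [show (-2 : ℤ) = -(2:ℕ) by norm_num, zpow_neg, zpow_natCast]
    rw [show r^3 = r * r^2 by ring, mul_inv]
    rw [← mul_assoc, mul_inv_cancel₀ hr0, one_mul]
  rw [MeasureTheory.setIntegral_congr_fun measurableSet_Icc heq]
  rw [MeasureTheory.integral_Icc_eq_integral_Ioc,
    ← intervalIntegral.integral_of_le hLR.le]
  rw [integral_zpow]
  · push_cast; field_simp; ring
  · right
    constructor
    · norm_num
    · rw [Set.uIcc_of_le hLR.le]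
      intro h
      exact absurd h.1 (by linarith)

/-- Fubini for a product-type integrand on `E3`. -/
lemma FFD.fubini (x : E2) (φ ψ : ℝ → ℝ) :
    ∫ z : E3, ψ (z 2) * φ ‖x - proj z‖ =
      (∫ t : ℝ, ψ t) * ∫ y : E2, φ ‖x - y‖ := by
  set e3 := (MeasurableEquiv.toLp 2 (Fin 3 → ℝ)).symm
  set p2 := MeasurableEquiv.piFinSuccAbove (fun _ : Fin 3 => ℝ) 2
  set e2 := (MeasurableEquiv.toLp 2 (Fin 2 → ℝ)).symm
  set G' : ℝ × (Fin 2 → ℝ) → ℝ :=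
    fun q => ψ q.1 * φ ‖x - (WithLp.equiv 2 (Fin 2 → ℝ)).symm q.2‖ with hG'
  have key : ∀ z : E3, ψ (z 2) * φ ‖x - proj z‖ = G' (p2 (e3 z)) := by
    intro z
    have h2 : (p2 (e3 z)).1 = z 2 := rfl
    have hp : (WithLp.equiv 2 (Fin 2 → ℝ)).symm (p2 (e3 z)).2 = proj z := by
      refine PiLp.ext fun j => ?_
      fin_cases j <;> rfl
    show ψ (z 2) * φ ‖x - proj z‖ = ψ (p2 (e3 z)).1 * φ ‖x - (WithLp.equiv 2 (Fin 2 → ℝ)).symm (p2 (e3 z)).2‖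
    rw [h2, hp]
  calc ∫ z : E3, ψ (z 2) * φ ‖x - proj z‖
      = ∫ z : E3, G' (p2 (e3 z)) := by simp_rw [key]
    _ = ∫ v : Fin 3 → ℝ, G' (p2 v) :=
        (EuclideanSpace.volume_preserving_symm_measurableEquiv_toLp (Fin 3)).integral_comp
          e3.measurableEmbedding (fun v => G' (p2 v))
    _ = ∫ q : ℝ × (Fin 2 → ℝ), G' q :=
        (volume_preserving_piFinSuccAbove (fun _ : Fin 3 => ℝ) 2).integral_comp
          p2.measurableEmbedding G'
    _ = (∫ t : ℝ, ψ t) * ∫ w : Fin 2 → ℝ, φ ‖x - (WithLp.equiv 2 (Fin 2 → ℝ)).symm w‖ := by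
        rw [hG', Measure.volume_eq_prod ℝ (Fin 2 → ℝ)]
        exact integral_prod_mul (μ := (volume : Measure ℝ)) (ν := (volume : Measure (Fin 2 → ℝ)))
          ψ (fun w => φ ‖x - (WithLp.equiv 2 (Fin 2 → ℝ)).symm w‖)
    _ = (∫ t : ℝ, ψ t) * ∫ y : E2, φ ‖x - y‖ := by
        congr 1
        exact ((EuclideanSpace.volume_preserving_symm_measurableEquiv_toLp (Fin 2)).symm e2).integral_comp
          e2.symm.measurableEmbedding (fun y => φ ‖x - y‖)

/-- Integrability transfer for a product-type integrand on `E3`. -/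
lemma FFD.integrable_transfer (x : E2) (φ ψ : ℝ → ℝ)
    (hψ : Integrable ψ) (hφ : Integrable (fun y : E2 => φ ‖x - y‖)) :
    Integrable (fun z : E3 => ψ (z 2) * φ ‖x - proj z‖) := by
  set e3 := (MeasurableEquiv.toLp 2 (Fin 3 → ℝ)).symm
  set p2 := MeasurableEquiv.piFinSuccAbove (fun _ : Fin 3 => ℝ) 2
  set e2 := (MeasurableEquiv.toLp 2 (Fin 2 → ℝ)).symm
  set G' : ℝ × (Fin 2 → ℝ) → ℝ :=
    fun q => ψ q.1 * φ ‖x - (WithLp.equiv 2 (Fin 2 → ℝ)).symm q.2‖ with hG'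
  have hφ' : Integrable (fun w : Fin 2 → ℝ => φ ‖x - (WithLp.equiv 2 (Fin 2 → ℝ)).symm w‖) := by
    have := (((EuclideanSpace.volume_preserving_symm_measurableEquiv_toLp (Fin 2)).symm e2).integrable_comp_emb
      e2.symm.measurableEmbedding (g := fun y : E2 => φ ‖x - y‖))
    exact this.2 hφ
  have hG'int : Integrable G' := by
    rw [hG', Measure.volume_eq_prod ℝ (Fin 2 → ℝ)]
    exact hψ.mul_prod hφ'
  have h1 : Integrable (fun v : Fin 3 → ℝ => G' (p2 v)) :=
    ((volume_preserving_piFinSuccAbove (fun _ : Fin 3 => ℝ) 2).integrable_comp_emb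
      p2.measurableEmbedding).2 hG'int
  have h2 : Integrable (fun z : E3 => G' (p2 (e3 z))) :=
    ((EuclideanSpace.volume_preserving_symm_measurableEquiv_toLp (Fin 3)).integrable_comp_emb
      e3.measurableEmbedding (g := fun v => G' (p2 v))).2 h1
  have key : ∀ z : E3, ψ (z 2) * φ ‖x - proj z‖ = G' (p2 (e3 z)) := by
    intro z
    have hp : (WithLp.equiv 2 (Fin 2 → ℝ)).symm (p2 (e3 z)).2 = proj z := by
      refine PiLp.ext fun j => ?_
      fin_cases j <;> rfl
    show ψ (z 2) * φ ‖x - proj z‖ = ψ (p2 (e3 z)).1 * φ ‖x - (WithLp.equiv 2 (Fin 2 → ℝ)).symm (p2 (e3 z)).2‖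
    rw [hp]; rfl
  simpa only [key] using h2

/-- **Far-field bound via the divergence theorem.**  There is a universal constant `C` such
that for every `M > 0`, every `C¹` function `f : ℝ² → ℝ` with `-M < f < M` and `∇f ∈ L²`,
every `x̄ = (x,x₃)` with `|x₃| ≤ M` and all `0 < L < R`, the integral of the kernel
`(x₁-y₁)(x₃-y₃)/|x̄-ȳ|⁵` over `U = {ȳ : L ≤ |x-y| ≤ R, f(y) ≤ y₃ ≤ M}` is bounded by
`C (‖∂₁f‖_{L²}/L + M/L + M/R)`. -/
theorem far_field_divergence_bound :
    ∃ C : ℝ, 0 < C ∧ ∀ (M : ℝ) (f : E2 → ℝ), 0 < M → ContDiff ℝ 1 f →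
      (∀ y, -M < f y ∧ f y < M) →
      MemLp (fun y => gradient f y) 2 volume →
      ∀ (x : E2) (x3 : ℝ), |x3| ≤ M → ∀ L R : ℝ, 0 < L → L < R →
        |∫ z in {z : E3 | L ≤ ‖x - proj z‖ ∧ ‖x - proj z‖ ≤ R ∧
              f (proj z) ≤ z 2 ∧ z 2 ≤ M},
            (x 0 - z 0) * (x3 - z 2) / ‖bar3 x x3 - z‖ ^ 5| ≤
          C * (l2norm (fun y => gradient f y 0) / L + M / L + M / R) := by
  refine ⟨4 * (volume (Metric.ball (0:E2) 1)).toReal + 1, by positivity, ?_⟩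
  intro M f hM hf hfb hgrad x x3 hx3 L R hL hLR
  set B := (volume (Metric.ball (0:E2) 1)).toReal with hB
  have hB0 : 0 ≤ B := ENNReal.toReal_nonneg
  set φ : ℝ → ℝ := Set.indicator (Icc L R) (fun r : ℝ => (r^3)⁻¹) with hφdef
  set ψ : ℝ → ℝ := Set.indicator (Icc (-M) M) (fun _ : ℝ => (1:ℝ)) with hψdef
  set G : E3 → ℝ := fun z => ψ (z 2) * φ ‖x - proj z‖ with hGdef
  set S := {z : E3 | L ≤ ‖x - proj z‖ ∧ ‖x - proj z‖ ≤ R ∧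
      f (proj z) ≤ z 2 ∧ z 2 ≤ M} with hSdef
  -- continuity facts
  have hcont1 : Continuous fun z : E3 => ‖x - proj z‖ :=
    (continuous_const.sub FFD.continuous_proj).norm
  have hcont2 : Continuous fun z : E3 => z 2 := by
    exact (EuclideanSpace.proj (2 : Fin 3)).continuous
  have hSm : MeasurableSet S := by
    have : S = {z : E3 | L ≤ ‖x - proj z‖} ∩ ({z : E3 | ‖x - proj z‖ ≤ R} ∩
        ({z : E3 | f (proj z) ≤ z 2} ∩ {z : E3 | z 2 ≤ M})) := by
      ext z; simp [hSdef, and_assoc]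
    rw [this]
    refine (measurableSet_le measurable_const hcont1.measurable).inter
      ((measurableSet_le hcont1.measurable measurable_const).inter
        ((measurableSet_le (hf.continuous.comp FFD.continuous_proj).measurable
          hcont2.measurable).inter (measurableSet_le hcont2.measurable measurable_const)))
  -- integrability
  have hφmeas : Measurable φ := Measurable.indicator (by measurability) measurableSet_Icc
  have hφint : Integrable (fun y : E2 => φ ‖x - y‖) := by
    refine Integrable.mono' (g := (Metric.closedBall x R).indicator fun _ => (L^3)⁻¹) ?_ ?_ ?_
    · exact (integrable_indicator_iff measurableSet_closedBall).2
        (integrableOn_const measure_closedBall_lt_top.ne)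
    · exact (hφmeas.comp ((continuous_const.sub continuous_id).norm.measurable)).aestronglyMeasurable
    · refine Filter.Eventually.of_forall fun y => ?_
      by_cases hy : ‖x - y‖ ∈ Icc L R
      · rw [hφdef, Set.indicator_of_mem hy]
        have hyball : y ∈ Metric.closedBall x R := by
          rw [Metric.mem_closedBall, dist_comm, dist_eq_norm]
          exact hy.2
        rw [Set.indicator_of_mem hyball]
        rw [Real.norm_eq_abs, abs_of_nonneg (by positivity)]
        exact inv_anti₀ (by positivity) (pow_le_pow_left₀ hL.le hy.1 3)
      · rw [hφdef, Set.indicator_of_notMem hy]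
        simp only [norm_zero]
        exact Set.indicator_nonneg (fun _ _ => by positivity) _
  have hψint : Integrable ψ :=
    (integrable_indicator_iff measurableSet_Icc).2
      (integrableOn_const measure_Icc_lt_top.ne)
  have hGint : Integrable G := FFD.integrable_transfer x φ ψ hψint hφint
  -- nonnegativity of G
  have hG0 : ∀ z, 0 ≤ G z := by
    intro z
    refine mul_nonneg (Set.indicator_nonneg (fun _ _ => zero_le_one) _)
      (Set.indicator_nonneg (fun r hr => ?_) _)
    have : (0:ℝ) < r := lt_of_lt_of_le hL hr.1
    positivity
  -- pointwise bound on S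
  have hbound : ∀ z ∈ S, |(x 0 - z 0) * (x3 - z 2) / ‖bar3 x x3 - z‖ ^ 5| ≤ G z := by
    intro z hz
    obtain ⟨h1, h2, h3, h4⟩ := hz
    have hxp : (0:ℝ) < ‖x - proj z‖ := lt_of_lt_of_le hL h1
    have hNL : L ≤ ‖bar3 x x3 - z‖ := h1.trans (FFD.proj_norm_le x x3 z)
    have hN0 : (0:ℝ) < ‖bar3 x x3 - z‖ := lt_of_lt_of_le hL hNL
    have hGz : G z = (‖x - proj z‖^3)⁻¹ := by
      have hmem1 : ‖x - proj z‖ ∈ Icc L R := ⟨h1, h2⟩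
      have hmem2 : z 2 ∈ Icc (-M) M := ⟨le_of_lt (lt_of_lt_of_le (hfb (proj z)).1 h3), h4⟩
      rw [hGdef]
      show ψ (z 2) * φ ‖x - proj z‖ = _
      rw [hψdef, hφdef, Set.indicator_of_mem hmem2, Set.indicator_of_mem hmem1, one_mul]
    have ha : |x 0 - z 0| ≤ ‖bar3 x x3 - z‖ := FFD.abs_coord_le_norm3 (bar3 x x3 - z) 0
    have hb : |x3 - z 2| ≤ ‖bar3 x x3 - z‖ := FFD.abs_coord_le_norm3 (bar3 x x3 - z) 2
    rw [hGz, abs_div, abs_mul, abs_pow, abs_norm]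
    set N := ‖bar3 x x3 - z‖
    have step1 : |x 0 - z 0| * |x3 - z 2| / N ^ 5 ≤ N * N / N^5 := by
      gcongr
    have step2 : N * N / N ^ 5 = (N^3)⁻¹ := by
      field_simp
    refine (step1.trans_eq step2).trans ?_
    exact inv_anti₀ (by positivity) (pow_le_pow_left₀ (norm_nonneg _) (FFD.proj_norm_le x x3 z) 3)
  -- integral values
  have hψval : ∫ t : ℝ, ψ t = 2 * M := by
    rw [hψdef, integral_indicator measurableSet_Icc, setIntegral_const, Real.volume_real_Icc_of_le (by linarith),
      smul_eq_mul, mul_one]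
    ring
  have hφval : ∫ y : E2, φ ‖x - y‖ = 2 * (B * (1/L - 1/R)) := by
    rw [integral_sub_left_eq_self (fun y : E2 => φ ‖y‖) volume x]
    rw [MeasureTheory.integral_fun_norm_addHaar (volume : Measure E2) φ]
    have hrad : ∫ y in Ioi (0:ℝ), y ^ (Module.finrank ℝ E2 - 1) • φ y = 1/L - 1/R := by
      simp only [finrank_euclideanSpace_fin]
      exact FFD.radial_integral L R hL hLR
    rw [hrad]
    simp only [finrank_euclideanSpace_fin, nsmul_eq_mul, smul_eq_mul, measureReal_def, ← hB]
    push_cast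
    ring
  -- the main estimate
  have key : |∫ z in S, (x 0 - z 0) * (x3 - z 2) / ‖bar3 x x3 - z‖ ^ 5| ≤
      2 * M * (2 * (B * (1/L - 1/R))) := by
    have h1 : |∫ z in S, (x 0 - z 0) * (x3 - z 2) / ‖bar3 x x3 - z‖ ^ 5| ≤
        ∫ z in S, |(x 0 - z 0) * (x3 - z 2) / ‖bar3 x x3 - z‖ ^ 5| := by
      simpa only [Real.norm_eq_abs] using norm_integral_le_integral_norm
        (μ := volume.restrict S) (fun z : E3 => (x 0 - z 0) * (x3 - z 2) / ‖bar3 x x3 - z‖ ^ 5)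
    have h2 : ∫ z in S, |(x 0 - z 0) * (x3 - z 2) / ‖bar3 x x3 - z‖ ^ 5| ≤ ∫ z in S, G z :=
      integral_mono_of_nonneg (Filter.Eventually.of_forall fun z => abs_nonneg _)
        hGint.restrict ((ae_restrict_iff' hSm).2 (Filter.Eventually.of_forall hbound))
    have h3 : ∫ z in S, G z ≤ ∫ z : E3, G z :=
      setIntegral_le_integral hGint (Filter.Eventually.of_forall hG0)
    have h4 : ∫ z : E3, G z = 2 * M * (2 * (B * (1/L - 1/R))) := by
      rw [hGdef]
      rw [FFD.fubini x φ ψ, hψval, hφval]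
    linarith
  refine key.trans ?_
  have hl2 : 0 ≤ l2norm (fun y => gradient f y 0) :=
    Real.rpow_nonneg (integral_nonneg fun y => sq_nonneg _) _
  have hML : 0 ≤ M / L := div_nonneg hM.le hL.le
  have hMR : 0 ≤ M / R := div_nonneg hM.le (hL.trans hLR).le
  have e1 : 2 * M * (2 * (B * (1/L - 1/R))) ≤ 4 * B * (M / L) := by
    have h5 : 1/L - 1/R ≤ 1/L := by
      have : (0:ℝ) ≤ 1/R := one_div_nonneg.2 (by linarith)
      linarith
    have h6 : 2 * M * (2 * (B * (1/L - 1/R))) = 4 * M * B * (1/L - 1/R) := by ring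
    have h7 : (4:ℝ) * B * (M / L) = 4 * M * B * (1/L) := by ring
    rw [h6, h7]
    exact mul_le_mul_of_nonneg_left h5
      (mul_nonneg (mul_nonneg (by norm_num) hM.le) hB0)
  refine e1.trans ?_
  have e2 : 4 * B * (M / L) ≤ (4 * B + 1) * (M / L) := by nlinarith
  refine e2.trans ?_
  refine mul_le_mul_of_nonneg_left ?_ (by positivity)
  have h8 : 0 ≤ l2norm (fun y => gradient f y 0) / L := div_nonneg hl2 hL.le
  linarith
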